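/- Let G be a graph and W a walk (x_1, x_2, ..., x_k) in G that visits every vertex of G and whose set of traversed edges induces a spanning tree of G. Then for any Hamiltonian graph M with more vertices than the maximum degree of that spanning tree, the Cartesian product of the spanning tree with M is a spanning Hamiltonian subgraph of G □ M; in particular G □ M is Hamiltonian. -/

import Mathlib

open SimpleGraph Walk

variable {V : Type*} {G : SimpleGraph V}

lemma hamCycle_iff {a : V} [DecidableEq V] [Fintype V] (p : G.Walk a a) :
    p.IsHamiltonianCycle ↔ p.IsCycle ∧ ∀ v, v ∈ p.support := by
  constructor
  · exact fun h => ⟨h.isCycle, h.mem_support⟩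
  · rintro ⟨hc, hs⟩
    refine Walk.IsHamiltonianCycle.mk hc ?_
    intro v
    have hnn : ¬ p.Nil := hc.not_nil
    show (p.tail.support).count v = 1
    rw [Walk.support_tail_of_not_nil p hnn]
    have hmem : v ∈ p.support.tail := by
      cases p with
      | nil => exact absurd hc Walk.IsCycle.not_of_nil
      | cons h q =>
        rcases List.mem_cons.1 (hs v) with rfl | hv
        · simpa using q.end_mem_support
        · simpa using hv
    exact List.count_eq_one_of_mem hc.support_nodup hmem

/-- In a path ending at `i`, any edge containing `i` is the last edge. -/
lemma path_end_edge : ∀ {b i : V} (q : G.Walk b i), q.IsPath → ∀ {j : V}, s(i, j) ∈ q.edges →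
    ∃ (q' : G.Walk b j) (h' : G.Adj j i), q = q'.concat h' := by
  intro b i q
  induction q with
  | nil => intro _ j hj; simp at hj
  | @cons b c i h q ih =>
    intro hp j hj
    rw [Walk.edges_cons, List.mem_cons] at hj
    rcases hj with hj | hj
    · have hne : i ≠ b := by
        rintro rfl
        exact (Walk.cons_isPath_iff h q).1 hp |>.2 q.end_mem_support
      rw [Sym2.eq_iff] at hj
      rcases hj with ⟨hib, hjc⟩ | ⟨hic, hjb⟩
      · exact absurd hib hne
      · subst hic; subst hjb
        have hq : q = Walk.nil := Walk.isPath_iff_eq_nil.1 ((Walk.cons_isPath_iff h q).1 hp).1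
        subst hq
        exact ⟨Walk.nil, h, rfl⟩
    · rcases ih ((Walk.cons_isPath_iff h q).1 hp).1 hj with ⟨q', h', rfl⟩
      exact ⟨Walk.cons h q', h', by rw [Walk.concat_cons]⟩
variable {V : Type*} {G : SimpleGraph V}

lemma exists_concat_of_not_nil {b i : V} (q : G.Walk b i) (hq : ¬ q.Nil) :
    ∃ (d : V) (q' : G.Walk b d) (h' : G.Adj d i), q = q'.concat h' := by
  have hq' : ¬ q.reverse.Nil := by
    rw [Walk.nil_iff_length_eq] at hq ⊢
    simpa using hq
  obtain ⟨d, h'', r, hr⟩ := Walk.not_nil_iff.1 hq'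
  refine ⟨d, r.reverse, h''.symm, ?_⟩
  have := congrArg Walk.reverse hr
  rwa [Walk.reverse_reverse, Walk.reverse_cons] at this

lemma closed_mem_tail {a : V} (p : G.Walk a a) (hp : ¬ p.Nil) {v} (hv : v ∈ p.support) :
    v ∈ p.support.tail := by
  cases p with
  | nil => simp at hp
  | cons h q =>
    rcases List.mem_cons.1 hv with rfl | hv'
    · simpa using q.end_mem_support
    · simpa using hv'

lemma hamCycle_edge_path_aux [DecidableEq V] [Fintype V] {x y : V} (c : G.Walk x x)
    (hc : c.IsHamiltonianCycle) (he : s(x, y) ∈ c.edges) :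
    ∃ p : G.Walk x y, p.IsPath ∧ (∀ v, v ∈ p.support) ∧ ∀ e ∈ p.edges, e ∈ c.edges := by
  cases c with
  | nil => simp at he
  | @cons x b _ h q =>
    obtain ⟨hqp, hxb⟩ := (Walk.cons_isCycle_iff q h).1 hc.isCycle
    have hcover : ∀ v, v ∈ q.support := by
      intro v
      rcases List.mem_cons.1 (hc.mem_support v) with rfl | hv
      · exact q.end_mem_support
      · exact hv
    rw [Walk.edges_cons, List.mem_cons] at he
    rcases he with he | he
    · rw [Sym2.eq_iff] at he
      rcases he with ⟨-, rfl⟩ | ⟨rfl, rfl⟩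
      · refine ⟨q.reverse, hqp.reverse, ?_, ?_⟩
        · intro v; rw [Walk.support_reverse, List.mem_reverse]; exact hcover v
        · intro e heq
          rw [Walk.edges_reverse, List.mem_reverse] at heq
          exact List.mem_cons_of_mem _ heq
      · exact absurd h (G.irrefl)
    · obtain ⟨q', h', rfl⟩ := path_end_edge q hqp he
      have hsupp : q'.support ++ [x] = (q'.concat h').support := by
        rw [Walk.support_concat]
      have hnd : (q'.support ++ [x]).Nodup := by rw [hsupp]; exact hqp.support_nodup
      have hq'p : q'.IsPath := Walk.IsPath.mk' (List.Nodup.of_append_left hnd)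
      have hxq' : x ∉ q'.support := by
        have := List.disjoint_of_nodup_append hnd
        intro hx; exact this hx (List.mem_singleton_self x)
      refine ⟨Walk.cons h q', (Walk.cons_isPath_iff h q').2 ⟨hq'p, hxq'⟩, ?_, ?_⟩
      · intro v
        rcases eq_or_ne v x with rfl | hvx
        · exact Walk.start_mem_support _
        · have := hcover v
          rw [← hsupp, List.mem_append] at this
          rcases this with h1 | h1
          · exact List.mem_cons_of_mem _ h1
          · exact absurd (List.mem_singleton.1 h1) hvx
      · intro e heq
        rw [Walk.edges_cons, List.mem_cons] at heq ⊢
        rcases heq with rfl | heq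
        · exact Or.inl rfl
        · refine Or.inr ?_
          rw [Walk.edges_concat, List.concat_eq_append]
          exact List.mem_append_left _ heq

lemma hamCycle_edge_path [DecidableEq V] [Fintype V] {a x y : V} (c : G.Walk a a)
    (hc : c.IsHamiltonianCycle) (he : s(x, y) ∈ c.edges) :
    ∃ p : G.Walk x y, p.IsPath ∧ (∀ v, v ∈ p.support) ∧ ∀ e ∈ p.edges, e ∈ c.edges := by
  have hx : x ∈ c.support := hc.mem_support x
  have hrot : (c.rotate x hx).IsHamiltonianCycle := by
    rw [hamCycle_iff]
    refine ⟨hc.isCycle.rotate hx, ?_⟩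
    intro v
    have : v ∈ c.support.tail := closed_mem_tail c hc.isCycle.not_nil (hc.mem_support v)
    have := (c.support_rotate x hx).mem_iff.2 this
    exact List.mem_of_mem_tail this
  have he' : s(x, y) ∈ (c.rotate x hx).edges := (c.rotate_edges x hx).mem_iff.2 he
  obtain ⟨p, h1, h2, h3⟩ := hamCycle_edge_path_aux _ hrot he'
  exact ⟨p, h1, h2, fun e hep => (c.rotate_edges x hx).mem_iff.1 (h3 e hep)⟩

lemma cycle_two_neighbors_aux {x : V} (c : G.Walk x x) (hc : c.IsCycle) :
    ∃ b d, b ≠ d ∧ s(x, b) ∈ c.edges ∧ s(x, d) ∈ c.edges := by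
  cases c with
  | nil => exact absurd hc Walk.IsCycle.not_of_nil
  | @cons x b _ h q =>
    obtain ⟨hqp, -⟩ := (Walk.cons_isCycle_iff q h).1 hc
    have hlen : 3 ≤ q.length + 1 := by simpa using hc.three_le_length
    have hqn : ¬ q.Nil := by rw [Walk.nil_iff_length_eq]; omega
    obtain ⟨d, q', h', rfl⟩ := exists_concat_of_not_nil q hqn
    have hbd : b ≠ d := by
      rintro rfl
      have : q' = Walk.nil := Walk.isPath_iff_eq_nil.1 <| by
        have hnd : (q'.support ++ [x]).Nodup := by
          rw [← Walk.support_concat q' h']; exact hqp.support_nodup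
        exact Walk.IsPath.mk' (List.Nodup.of_append_left hnd)
      subst this
      simp [Walk.concat_nil] at hlen
    refine ⟨b, d, hbd, by simp, ?_⟩
    rw [Walk.edges_cons]
    refine List.mem_cons_of_mem _ ?_
    rw [Walk.edges_concat, List.concat_eq_append, Sym2.eq_swap]
    exact List.mem_append_right _ (List.mem_singleton_self _)

lemma cycle_two_neighbors [DecidableEq V] {a x : V} (c : G.Walk a a) (hc : c.IsCycle) (hx : x ∈ c.support) :
    ∃ b d, b ≠ d ∧ s(x, b) ∈ c.edges ∧ s(x, d) ∈ c.edges := by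
  obtain ⟨b, d, hbd, h1, h2⟩ := cycle_two_neighbors_aux (c.rotate x hx) (hc.rotate hx)
  exact ⟨b, d, hbd, (c.rotate_edges x hx).mem_iff.1 h1, (c.rotate_edges x hx).mem_iff.1 h2⟩

lemma ncard_neighborSet_eq_degree [Fintype V] (T : SimpleGraph V) [DecidableRel T.Adj] (v : V) :
    (T.neighborSet v).ncard = T.degree v := by
  rw [SimpleGraph.degree, SimpleGraph.neighborFinset, Set.ncard_eq_toFinset_card']

lemma exists_leaf [Fintype V] [DecidableEq V] (T : SimpleGraph V) (ht : T.IsTree)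
    (h2 : 2 ≤ Fintype.card V) : ∃ l : V, (T.neighborSet l).ncard = 1 := by
  classical
  have hdeg1 : ∀ v : V, 1 ≤ T.degree v := by
    intro v
    obtain ⟨w, hw⟩ := Fintype.exists_ne_of_one_lt_card (by omega) v
    obtain ⟨p⟩ := ht.isConnected.preconnected v w
    have hnn : ¬ p.Nil := Walk.not_nil_of_ne (Ne.symm hw)
    obtain ⟨u, hadj, r, -⟩ := Walk.not_nil_iff.1 hnn
    exact (T.degree_pos_iff_exists_adj v).2 ⟨u, hadj⟩
  by_contra hno
  push_neg at hno
  have hdeg2 : ∀ v : V, 2 ≤ T.degree v := by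
    intro v
    have h1 := hdeg1 v
    have := hno v
    rw [ncard_neighborSet_eq_degree] at this
    omega
  have hsum : ∑ v : V, T.degree v = 2 * T.edgeFinset.card :=
    T.sum_degrees_eq_twice_card_edges
  have hcard := ht.card_edgeFinset
  have hge : 2 * Fintype.card V ≤ ∑ v : V, T.degree v := by
    calc 2 * Fintype.card V = ∑ _v : V, 2 := by simp [mul_comm]
    _ ≤ ∑ v : V, T.degree v := Finset.sum_le_sum fun v _ => hdeg2 v
  omega

lemma interior_two_neighbors [DecidableEq V] :
    ∀ {a b : V} (p : G.Walk a b), p.IsPath → ∀ {l : V}, l ∈ p.support → l ≠ a → l ≠ b →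
    ∃ n1 n2, n1 ≠ n2 ∧ G.Adj l n1 ∧ G.Adj l n2 := by
  intro a b p
  induction p with
  | nil => intro _ l hl hla _; simp at hl; exact absurd hl hla
  | @cons a c b h q ih =>
    intro hp l hl hla hlb
    have hlq : l ∈ q.support := by
      rcases List.mem_cons.1 (by simpa using hl) with rfl | hv
      · exact absurd rfl hla
      · exact hv
    rcases eq_or_ne l c with rfl | hlc
    · have hnn : ¬ q.Nil := Walk.not_nil_of_ne hlb
      obtain ⟨d, hadj, r, hr⟩ := Walk.not_nil_iff.1 hnn
      refine ⟨a, d, ?_, h.symm, hadj⟩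
      intro had
      subst had
      have : a ∈ q.support := by rw [hr]; exact List.mem_cons_of_mem _ r.start_mem_support
      exact ((Walk.cons_isPath_iff h q).1 hp).2 this
    · exact ih ((Walk.cons_isPath_iff h q).1 hp).1 hlq hlc hlb

lemma path_avoids_leaf [Fintype V] [DecidableEq V] {T : SimpleGraph V} {l : V}
    (hl : (T.neighborSet l).ncard = 1) {a b : V} (p : T.Walk a b) (hp : p.IsPath)
    (hla : a ≠ l) (hlb : b ≠ l) : ∀ v ∈ p.support, v ≠ l := by
  intro v hv
  rintro rfl
  obtain ⟨n1, n2, hne, h1, h2⟩ :=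
    interior_two_neighbors p hp hv (Ne.symm hla) (Ne.symm hlb)
  have hsub : {n1, n2} ⊆ T.neighborSet v := by
    rintro z (rfl | hz)
    · exact h1
    · rw [Set.mem_singleton_iff] at hz; subst hz; exact h2
  have := Set.ncard_le_ncard hsub (Set.toFinite _)
  rw [Set.ncard_pair hne, hl] at this
  omega

lemma reachable_comap {P : V → Prop} :
    ∀ {a b : V} (p : G.Walk a b) (_ : ∀ v ∈ p.support, P v) (ha : P a) (hb : P b),
    (G.comap (Subtype.val : Subtype P → V)).Reachable ⟨a, ha⟩ ⟨b, hb⟩ := by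
  intro a b p
  induction p with
  | nil => intro _ ha hb; rfl
  | @cons a c b h q ih =>
    intro hs ha hb
    have hc : P c := hs c (by simp)
    have hadj : (G.comap (Subtype.val : Subtype P → V)).Adj ⟨a, ha⟩ ⟨c, hc⟩ := h
    exact hadj.reachable.trans (ih (fun v hv => hs v (by simp [hv])) hc hb)

lemma subtree_isTree [Fintype V] [DecidableEq V] {T : SimpleGraph V} (ht : T.IsTree)
    {l : V} (hl : (T.neighborSet l).ncard = 1) :
    (T.comap (Subtype.val : {v // v ≠ l} → V)).IsTree := by
  obtain ⟨u, hu⟩ := Set.ncard_eq_one.1 hl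
  have hul : u ≠ l := by
    have : T.Adj l u := by rw [← SimpleGraph.mem_neighborSet, hu]; rfl
    exact fun h => T.irrefl (h ▸ this.symm)
  constructor
  · rw [connected_iff]
    refine ⟨?_, ⟨⟨u, hul⟩⟩⟩
    intro a b
    obtain ⟨w⟩ := ht.isConnected.preconnected a.1 b.1
    have hb : ∀ v ∈ (w.toPath : T.Walk a.1 b.1).support, v ≠ l :=
      path_avoids_leaf hl _ w.toPath.2 a.2 b.2
    have := reachable_comap (w.toPath : T.Walk a.1 b.1) hb a.2 b.2
    simpa using this
  · intro v c hc
    have : (c.map ⟨Subtype.val, fun h => h⟩).IsCycle :=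
      hc.map (f := ⟨Subtype.val, fun h => h⟩) Subtype.val_injective
    exact ht.IsAcyclic _ this

lemma ncard_comap_le [Fintype V] {T : SimpleGraph V} {P : V → Prop} (x : Subtype P) :
    ((T.comap (Subtype.val : Subtype P → V)).neighborSet x).ncard ≤
      (T.neighborSet x.1).ncard := by
  have himg : Subtype.val '' ((T.comap (Subtype.val : Subtype P → V)).neighborSet x)
      ⊆ T.neighborSet x.1 := by
    rintro _ ⟨y, hy, rfl⟩
    exact hy
  calc ((T.comap (Subtype.val : Subtype P → V)).neighborSet x).ncard
      = (Subtype.val '' ((T.comap (Subtype.val : Subtype P → V)).neighborSet x)).ncard :=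
        (Set.ncard_image_of_injective _ Subtype.val_injective).symm
    _ ≤ _ := Set.ncard_le_ncard himg (Set.toFinite _)

open Finset in
lemma exists_vertical_edge {V W : Type} [Fintype V] [Fintype W] [DecidableEq V] [DecidableEq W]
    {T : SimpleGraph V} {M : SimpleGraph W} {a : V × W} {p : (T □ M).Walk a a}
    (hp : p.IsHamiltonianCycle) (u : V)
    (hinv : ∀ y : V, (univ.filter fun t : W => s((u, t), (y, t)) ∈ p.edges).card ≤ 2)
    (hdeg : (T.neighborSet u).ncard < Fintype.card W) :
    ∃ i j, s(((u : V), (i : W)), (u, j)) ∈ p.edges := by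
  classical
  by_contra hno
  push_neg at hno
  set E : Finset (V × W) := univ.filter (fun q => s((u, q.2), (q.1, q.2)) ∈ p.edges) with hE
  have hmemE : ∀ q : V × W, q ∈ E ↔ s((u, q.2), (q.1, q.2)) ∈ p.edges := by
    intro q; simp [hE]
  have hadjE : ∀ q ∈ E, q.1 ∈ T.neighborFinset u := by
    intro q hq
    have hadj := p.adj_of_mem_edges ((hmemE q).1 hq)
    rw [SimpleGraph.boxProd_adj] at hadj
    rcases hadj with ⟨h1, -⟩ | ⟨h1, -⟩
    · simpa using h1
    · exact absurd h1 (M.irrefl)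
  have hup : E.card ≤ 2 * (T.neighborSet u).ncard := by
    rw [Finset.card_eq_sum_card_fiberwise hadjE]
    have hfib : ∀ v ∈ T.neighborFinset u,
        (E.filter fun q => q.1 = v).card ≤ 2 := by
      intro v _
      refine le_trans ?_ (hinv v)
      refine Finset.card_le_card_of_injOn (fun q => q.2) ?_ ?_
      · intro q hq
        rw [Finset.mem_coe, Finset.mem_filter] at hq ⊢
        obtain ⟨hq1, hq2⟩ := hq
        refine ⟨Finset.mem_univ _, ?_⟩
        have := (hmemE q).1 hq1
        rwa [hq2] at this
      · intro q1 h1 q2 h2 hq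
        rw [Finset.mem_coe, Finset.mem_filter] at h1 h2
        exact Prod.ext (h1.2.trans h2.2.symm) hq
    calc ∑ v ∈ T.neighborFinset u, (E.filter fun q => q.1 = v).card
        ≤ ∑ _v ∈ T.neighborFinset u, 2 := Finset.sum_le_sum hfib
      _ = 2 * (T.neighborFinset u).card := by rw [Finset.sum_const]; rw [smul_eq_mul, mul_comm]
      _ = 2 * (T.neighborSet u).ncard := by
          rw [ncard_neighborSet_eq_degree]; rfl
  have hlow : 2 * Fintype.card W ≤ E.card := by
    have hfib : ∀ t : W, 2 ≤ (E.filter fun q => q.2 = t).card := by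
      intro t
      obtain ⟨y, z, hyz, hy, hz⟩ :=
        cycle_two_neighbors p hp.isCycle (hp.mem_support (u, t))
      have hana : ∀ y' : V × W, s((u, t), y') ∈ p.edges → T.Adj u y'.1 ∧ y'.2 = t := by
        intro y' hy'
        have hadj := p.adj_of_mem_edges hy'
        rw [SimpleGraph.boxProd_adj] at hadj
        rcases hadj with ⟨h1, h2⟩ | ⟨h1, h2⟩
        · exact ⟨h1, h2.symm⟩
        · exfalso
          have : y' = (u, y'.2) := Prod.ext h2.symm rfl
          rw [this] at hy'
          exact hno t y'.2 hy'
      obtain ⟨y1, y2⟩ := y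
      obtain ⟨z1, z2⟩ := z
      obtain ⟨hyadj, hyt⟩ := hana _ hy
      obtain ⟨hzadj, hzt⟩ := hana _ hz
      dsimp at hyt hzt
      rw [hyt] at hy hyz
      rw [hzt] at hz hyz
      have hymem : ((y1, t) : V × W) ∈ E.filter fun q => q.2 = t := by
        rw [Finset.mem_filter, hmemE]
        exact ⟨hy, rfl⟩
      have hzmem : ((z1, t) : V × W) ∈ E.filter fun q => q.2 = t := by
        rw [Finset.mem_filter, hmemE]
        exact ⟨hz, rfl⟩
      have hsub2 : ({(y1, t), (z1, t)} : Finset (V × W)) ⊆ E.filter fun q => q.2 = t := by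
        intro q hq
        rcases Finset.mem_insert.1 hq with rfl | hq
        · exact hymem
        · rw [Finset.mem_singleton] at hq; subst hq; exact hzmem
      calc 2 = ({(y1, t), (z1, t)} : Finset (V × W)).card := (Finset.card_pair hyz).symm
        _ ≤ _ := Finset.card_le_card hsub2
    have := Finset.card_eq_sum_card_fiberwise
      (f := fun q : V × W => q.2) (s := E) (t := univ) (fun q _ => Finset.mem_univ _)
    rw [this]
    calc 2 * Fintype.card W = ∑ _t : W, 2 := by rw [Finset.sum_const]; simp [mul_comm]
      _ ≤ _ := Finset.sum_le_sum fun t _ => hfib t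
  omega

section Main
open Finset

lemma treeBox (W : Type) [Fintype W] [DecidableEq W] (M : SimpleGraph W) {w0 : W}
    (c : M.Walk w0 w0) (hc : c.IsHamiltonianCycle)
    (hedge : ∀ i j : W, M.Adj i j → s(i, j) ∈ c.edges) :
    ∀ (n : ℕ) (V : Type) [Fintype V] [DecidableEq V] (T : SimpleGraph V),
      Fintype.card V = n → T.IsTree →
      (∀ v, (T.neighborSet v).ncard < Fintype.card W) →
      ∃ (a : V × W) (p : (T □ M).Walk a a), p.IsHamiltonianCycle ∧
        ∀ x y : V, (univ.filter fun t : W => s((x, t), (y, t)) ∈ p.edges).card ≤ 2 := by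
  intro n
  induction n using Nat.strong_induction_on with
  | _ n ih =>
    intro V _ _ T hcard htree hdeg
    rcases Nat.lt_or_ge n 2 with hn2 | hn2
    · -- n = 0 or 1
      have hpos : 0 < Fintype.card V := Fintype.card_pos_iff.2 htree.isConnected.nonempty
      have hone : Fintype.card V = 1 := by omega
      obtain ⟨v0, hv0⟩ := Fintype.card_eq_one_iff.1 hone
      have hbij : Function.Bijective (SimpleGraph.boxProdRight T M v0).toHom := by
        constructor
        · exact (SimpleGraph.boxProdRight T M v0).injective
        · rintro ⟨v, t⟩
          exact ⟨t, by rw [show v = v0 from hv0 v]; rfl⟩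
      refine ⟨(v0, w0), c.map (SimpleGraph.boxProdRight T M v0).toHom,
        hc.map hbij, ?_⟩
      intro x y
      have hempty : (univ.filter fun t : W =>
          s((x, t), (y, t)) ∈ (c.map (SimpleGraph.boxProdRight T M v0).toHom).edges) = ∅ := by
        rw [Finset.filter_eq_empty_iff]
        intro t _
        intro hmem
        have hadj := Walk.adj_of_mem_edges _ hmem
        rw [hv0 x, hv0 y] at hadj
        rw [SimpleGraph.boxProd_adj] at hadj
        rcases hadj with ⟨h1, -⟩ | ⟨h1, -⟩
        · exact T.irrefl h1
        · exact M.irrefl h1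
      exact (congrArg Finset.card hempty).trans_le (by simp)
    · -- inductive step
      have h2V : 2 ≤ Fintype.card V := by omega
      obtain ⟨l, hl⟩ := exists_leaf T htree h2V
      obtain ⟨u, hu⟩ := Set.ncard_eq_one.1 hl
      have hTlu : T.Adj l u := by rw [← SimpleGraph.mem_neighborSet, hu]; rfl
      have hul : u ≠ l := fun h => T.irrefl (h ▸ hTlu.symm)
      set T' : SimpleGraph {v : V // v ≠ l} := T.comap Subtype.val with hT'
      have htree' : T'.IsTree := subtree_isTree htree hl
      have hdeg' : ∀ v' : {v : V // v ≠ l}, (T'.neighborSet v').ncard < Fintype.card W :=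
        fun v' => lt_of_le_of_lt (ncard_comap_le v') (hdeg v'.1)
      have hcard' : Fintype.card {v : V // v ≠ l} = n - 1 := by
        have h0 : Fintype.card {v : V // v ≠ l} = Fintype.card {v : V // ¬ v = l} :=
          Fintype.card_congr (Equiv.subtypeEquivRight (fun x => Iff.rfl))
        have h1 := Fintype.card_subtype_compl (fun v : V => v = l)
        simp only [Fintype.card_subtype_eq] at h1
        omega
      obtain ⟨a', p', hp', hinv'⟩ := ih (n - 1) (by omega) {v : V // v ≠ l} T'
        hcard' htree' hdeg'
      set u' : {v : V // v ≠ l} := ⟨u, hul⟩ with hu'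
      obtain ⟨i, j, hij⟩ := exists_vertical_edge hp' u' (fun y => hinv' u' y) (hdeg' u')
      have hMij : M.Adj i j := by
        have hadj := p'.adj_of_mem_edges hij
        rw [SimpleGraph.boxProd_adj] at hadj
        rcases hadj with ⟨h1, -⟩ | ⟨h1, -⟩
        · exact absurd h1 T'.irrefl
        · exact h1
      have hijne : i ≠ j := hMij.ne
      have hcij : s(i, j) ∈ c.edges := hedge i j hMij
      -- hamiltonian path P in T' □ M from (u',j) to (u',i)
      have hij' : s(((u' : {v : V // v ≠ l}), j), (u', i)) ∈ p'.edges := by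
        rwa [Sym2.eq_swap]
      obtain ⟨P, hPpath, hPcov, hPsub⟩ := hamCycle_edge_path p' hp' hij'
      -- hamiltonian path Q in M from i to j
      obtain ⟨Q, hQpath, hQcov, -⟩ := hamCycle_edge_path c hc hcij
      -- the embedding homs
      have hιadj : ∀ q r : {v : V // v ≠ l} × W, (T' □ M).Adj q r →
          (T □ M).Adj (q.1.1, q.2) (r.1.1, r.2) := by
        intro q r h
        rw [SimpleGraph.boxProd_adj] at h ⊢
        rcases h with ⟨h1, h2⟩ | ⟨h1, h2⟩
        · exact Or.inl ⟨h1, h2⟩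
        · exact Or.inr ⟨h1, congrArg Subtype.val h2⟩
      set ι : (T' □ M) →g (T □ M) := ⟨fun q => (q.1.1, q.2), fun {q r} h => hιadj q r h⟩ with hι
      have hιinj : Function.Injective ι := by
        rintro ⟨⟨q1, hq1⟩, q2⟩ ⟨⟨r1, hr1⟩, r2⟩ h
        have h1 : q1 = r1 := congrArg Prod.fst h
        have h2 : q2 = r2 := congrArg Prod.snd h
        subst h1; subst h2
        rfl
      set Pm : (T □ M).Walk (u, j) (u, i) := P.map ι with hPm
      set κ := (SimpleGraph.boxProdRight T M l).toHom with hκ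
      have hκinj : Function.Injective κ := (SimpleGraph.boxProdRight T M l).injective
      set Qm : (T □ M).Walk (l, i) (l, j) := Q.map κ with hQm
      have h1 : (T □ M).Adj (u, i) (l, i) := by
        rw [SimpleGraph.boxProd_adj]; exact Or.inl ⟨hTlu.symm, rfl⟩
      have h2 : (T □ M).Adj (l, j) (u, j) := by
        rw [SimpleGraph.boxProd_adj]; exact Or.inl ⟨hTlu, rfl⟩
      set S : (T □ M).Walk (l, i) (u, i) := Qm.append (Walk.cons h2 Pm) with hS
      set pNew : (T □ M).Walk (u, i) (u, i) := Walk.cons h1 S with hpNew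
      -- support and edge facts
      have hQmsupp1 : ∀ q ∈ Qm.support, q.1 = l := by
        intro q hq
        change q ∈ (Q.map κ).support at hq
        rw [Walk.support_map] at hq
        obtain ⟨b, -, rfl⟩ := List.mem_map.1 hq
        rfl
      have hQmfull : ∀ t : W, ((l, t) : V × W) ∈ Qm.support := by
        intro t
        show ((l, t) : V × W) ∈ (Q.map κ).support
        rw [Walk.support_map]
        exact List.mem_map.2 ⟨t, hQcov t, rfl⟩
      have hPmsupp1 : ∀ q ∈ Pm.support, q.1 ≠ l := by
        intro q hq
        rw [hPm, Walk.support_map] at hq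
        obtain ⟨b, -, rfl⟩ := List.mem_map.1 hq
        exact b.1.2
      have hPmfull : ∀ (v : V) (hv : v ≠ l) (t : W), ((v, t) : V × W) ∈ Pm.support := by
        intro v hv t
        rw [hPm, Walk.support_map]
        exact List.mem_map.2 ⟨(⟨v, hv⟩, t), hPcov _, rfl⟩
      have hQmedge : ∀ e ∈ Qm.edges, ∃ b1 b2 : W, e = s(((l : V), b1), (l, b2)) := by
        intro e he
        change e ∈ (Q.map κ).edges at he
        rw [Walk.edges_map] at he
        obtain ⟨e', he', heq⟩ := List.mem_map.1 he
        revert heq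
        induction e' using Sym2.ind with
        | _ b1 b2 =>
          intro heq
          refine ⟨b1, b2, ?_⟩
          rw [← heq, Sym2.map_pair_eq]
          rfl
      have hPmedge : ∀ (x y : V) (t : W), s((x, t), (y, t)) ∈ Pm.edges →
          ∃ (hx : x ≠ l) (hy : y ≠ l),
            s(((⟨x, hx⟩ : {v : V // v ≠ l}), t), (⟨y, hy⟩, t)) ∈ p'.edges := by
        intro x y t he
        rw [hPm, Walk.edges_map] at he
        obtain ⟨e', he', heq⟩ := List.mem_map.1 he
        revert he' heq
        induction e' using Sym2.ind with
        | _ d1 d2 =>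
          intro he' heq
          obtain ⟨⟨x1, hx1⟩, t1⟩ := d1
          obtain ⟨⟨y1, hy1⟩, t2⟩ := d2
          rw [Sym2.map_pair_eq] at heq
          rw [Sym2.eq_iff] at heq
          rcases heq with ⟨hd1, hd2⟩ | ⟨hd1, hd2⟩
          · have hx1x : x1 = x := congrArg Prod.fst hd1
            have ht1 : t1 = t := congrArg Prod.snd hd1
            have hy1y : y1 = y := congrArg Prod.fst hd2
            have ht2 : t2 = t := congrArg Prod.snd hd2
            subst hx1x; subst ht1; subst hy1y; subst ht2
            exact ⟨hx1, hy1, hPsub _ he'⟩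
          · have hx1y : x1 = y := congrArg Prod.fst hd1
            have ht1 : t1 = t := congrArg Prod.snd hd1
            have hy1x : y1 = x := congrArg Prod.fst hd2
            have ht2 : t2 = t := congrArg Prod.snd hd2
            subst hx1y; subst ht1; subst hy1x; subst ht2
            refine ⟨hy1, hx1, ?_⟩
            rw [Sym2.eq_swap]
            exact hPsub _ he'
      -- the new walk is a cycle
      have hSsupp : S.support = Qm.support ++ Pm.support := by
        rw [hS, Walk.support_append, Walk.support_cons, List.tail_cons]
      have hSpath : S.IsPath := by
        apply Walk.IsPath.mk'
        rw [hSsupp]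
        refine List.Nodup.append ?_ ?_ ?_
        · exact (Walk.map_isPath_of_injective hκinj hQpath).support_nodup
        · exact (Walk.map_isPath_of_injective hιinj hPpath).support_nodup
        · intro q hq1 hq2
          exact hPmsupp1 q hq2 (hQmsupp1 q hq1)
      have hSedges : S.edges = Qm.edges ++ (s(((l : V), j), ((u : V), j)) :: Pm.edges) := by
        rw [hS, Walk.edges_append, Walk.edges_cons]
      have hheadnotin : s(((u : V), i), ((l : V), i)) ∉ S.edges := by
        rw [hSedges]
        intro hmem
        rcases List.mem_append.1 hmem with hmem | hmem
        · obtain ⟨b1, b2, heq⟩ := hQmedge _ hmem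
          rw [Sym2.eq_iff] at heq
          rcases heq with ⟨he1, -⟩ | ⟨he1, -⟩
          · exact hul (congrArg Prod.fst he1)
          · exact hul (congrArg Prod.fst he1)
        · rcases List.mem_cons.1 hmem with heq | hmem
          · rw [Sym2.eq_iff] at heq
            rcases heq with ⟨he1, he2⟩ | ⟨he1, he2⟩
            · exact hul (congrArg Prod.fst he1)
            · exact hijne (congrArg Prod.snd he1)
          · have := Pm.snd_mem_support_of_mem_edges hmem
            exact hPmsupp1 _ this rfl
      have hcyc : pNew.IsCycle := by
        rw [hpNew]
        exact (Walk.cons_isCycle_iff S h1).2 ⟨hSpath, hheadnotin⟩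
      have hham : pNew.IsHamiltonianCycle := by
        rw [hamCycle_iff]
        refine ⟨hcyc, ?_⟩
        rintro ⟨v, t⟩
        rw [hpNew, Walk.support_cons]
        refine List.mem_cons_of_mem _ ?_
        rw [hSsupp, List.mem_append]
        rcases eq_or_ne v l with rfl | hv
        · exact Or.inl (hQmfull t)
        · exact Or.inr (hPmfull v hv t)
      refine ⟨((u : V), i), pNew, hham, ?_⟩
      have hedgesNew : pNew.edges =
          s(((u : V), i), ((l : V), i)) ::
            (Qm.edges ++ (s(((l : V), j), ((u : V), j)) :: Pm.edges)) := by
        rw [hpNew, Walk.edges_cons, hSedges]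
      have hlz : ∀ (z : V), z ≠ l → ∀ t : W,
          s(((l : V), t), (z, t)) ∈ pNew.edges → t = i ∨ t = j := by
        intro z hz t hmem
        rw [hedgesNew] at hmem
        rcases List.mem_cons.1 hmem with heq | hmem
        · rw [Sym2.eq_iff] at heq
          rcases heq with ⟨he1, he2⟩ | ⟨he1, he2⟩
          · exact absurd (congrArg Prod.fst he1).symm hul
          · exact Or.inl (congrArg Prod.snd he1)
        rcases List.mem_append.1 hmem with hmem | hmem
        · obtain ⟨b1, b2, heq⟩ := hQmedge _ hmem
          rw [Sym2.eq_iff] at heq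
          rcases heq with ⟨-, he2⟩ | ⟨-, he2⟩
          · exact absurd (congrArg Prod.fst he2) hz
          · exact absurd (congrArg Prod.fst he2) hz
        rcases List.mem_cons.1 hmem with heq | hmem
        · rw [Sym2.eq_iff] at heq
          rcases heq with ⟨he1, he2⟩ | ⟨he1, he2⟩
          · exact Or.inr (congrArg Prod.snd he1)
          · exact absurd (congrArg Prod.fst he1).symm hul
        · have := Pm.fst_mem_support_of_mem_edges hmem
          exact absurd rfl (hPmsupp1 _ this)
      have honeside : ∀ (z : V), z ≠ l →
          (univ.filter fun t : W => s(((l : V), t), (z, t)) ∈ pNew.edges).card ≤ 2 := by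
        intro z hz
        have hsub : (univ.filter fun t : W => s(((l : V), t), (z, t)) ∈ pNew.edges)
            ⊆ ({i, j} : Finset W) := by
          intro t ht
          rw [Finset.mem_filter] at ht
          rcases hlz z hz t ht.2 with rfl | rfl
          · exact Finset.mem_insert_self _ _
          · exact Finset.mem_insert_of_mem (Finset.mem_singleton_self _)
        calc _ ≤ ({i, j} : Finset W).card := Finset.card_le_card hsub
          _ ≤ 2 := by rw [Finset.card_pair hijne]
      intro x y
      by_cases hxl : x = l
      · by_cases hyl : y = l
        · have hempty : (univ.filter fun t : W => s((x, t), (y, t)) ∈ pNew.edges) = ∅ := by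
            rw [Finset.filter_eq_empty_iff]
            intro t _ hmem
            rw [hxl, hyl] at hmem
            exact (T □ M).irrefl (pNew.adj_of_mem_edges hmem)
          rw [hempty]
          simp
        · simp only [hxl]
          exact honeside y hyl
      · by_cases hyl : y = l
        · have hrw : ∀ t : W, s((x, t), ((l : V), t)) = s(((l : V), t), (x, t)) :=
            fun t => Sym2.eq_swap
          simp only [hyl, hrw]
          exact honeside x hxl
        · refine le_trans (Finset.card_le_card ?_) (hinv' ⟨x, hxl⟩ ⟨y, hyl⟩)
          intro t ht
          rw [Finset.mem_filter] at ht ⊢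
          refine ⟨Finset.mem_univ _, ?_⟩
          have hmem := ht.2
          rw [hedgesNew] at hmem
          rcases List.mem_cons.1 hmem with heq | hmem
          · rw [Sym2.eq_iff] at heq
            rcases heq with ⟨he1, he2⟩ | ⟨he1, he2⟩
            · exact absurd (congrArg Prod.fst he2) hyl
            · exact absurd (congrArg Prod.fst he1) hxl
          rcases List.mem_append.1 hmem with hmem | hmem
          · obtain ⟨b1, b2, heq⟩ := hQmedge _ hmem
            rw [Sym2.eq_iff] at heq
            rcases heq with ⟨he1, -⟩ | ⟨he1, -⟩
            · exact absurd (congrArg Prod.fst he1) hxl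
            · exact absurd (congrArg Prod.fst he1) hxl
          rcases List.mem_cons.1 hmem with heq | hmem
          · rw [Sym2.eq_iff] at heq
            rcases heq with ⟨he1, he2⟩ | ⟨he1, he2⟩
            · exact absurd (congrArg Prod.fst he1) hxl
            · exact absurd (congrArg Prod.fst he2) hyl
          · obtain ⟨hx', hy', hmem'⟩ := hPmedge x y t hmem
            exact hmem'
end Main

/-- If a walk `w` in `G` visits every vertex and its traversed edges induce a
spanning tree `T` of `G`, then for every Hamiltonian graph `M` with more
vertices than the maximum degree of `T`, the product `T □ M` is a Hamiltonian
spanning subgraph of `G □ M`; in particular `G □ M` is Hamiltonian. -/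
theorem boxProd_hamiltonian_of_spanning_tree_walk
    (V W : Type) [Fintype V] [Fintype W] [DecidableEq V] [DecidableEq W]
    (G : SimpleGraph V) (M : SimpleGraph W) (x y : V) (w : G.Walk x y)
    (hspan : ∀ v : V, v ∈ w.support)
    (T : SimpleGraph V) (hTdef : T = SimpleGraph.fromEdgeSet {e | e ∈ w.edges})
    (htree : T.IsTree) (hM : M.IsHamiltonian)
    (hdeg : ∀ v : V, (T.neighborSet v).ncard < Fintype.card W) :
    (T.boxProd M).IsHamiltonian ∧
    T.boxProd M ≤ G.boxProd M ∧
    (G.boxProd M).IsHamiltonian := by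
  have hTG : T ≤ G := by
    rw [hTdef]
    intro a b hab
    rw [SimpleGraph.fromEdgeSet_adj] at hab
    exact w.adj_of_mem_edges hab.1
  have hbox : T.boxProd M ≤ G.boxProd M := by
    intro q r h
    rw [SimpleGraph.boxProd_adj] at h ⊢
    rcases h with ⟨h1, h2⟩ | ⟨h1, h2⟩
    · exact Or.inl ⟨hTG h1, h2⟩
    · exact Or.inr ⟨h1, h2⟩
  have hham : (T.boxProd M).IsHamiltonian := by
    intro hne1
    -- rule out `Fintype.card W = 1`
    have hWne1 : Fintype.card W ≠ 1 := by
      intro hW1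
      have hV1 : Fintype.card V = 1 := by
        by_contra hV
        have hVpos : 0 < Fintype.card V := Fintype.card_pos_iff.2 htree.isConnected.nonempty
        have h2V : 2 ≤ Fintype.card V := by omega
        -- some vertex has a neighbor
        obtain ⟨v⟩ := htree.isConnected.nonempty
        obtain ⟨v', hv'⟩ := Fintype.exists_ne_of_one_lt_card (by omega) v
        obtain ⟨p⟩ := htree.isConnected.preconnected v v'
        have hnn : ¬ p.Nil := Walk.not_nil_of_ne (Ne.symm hv')
        obtain ⟨z, hadj, -, -⟩ := Walk.not_nil_iff.1 hnn
        have : 1 ≤ (T.neighborSet v).ncard := by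
          rw [Nat.one_le_iff_ne_zero, Ne, Set.ncard_eq_zero (Set.toFinite _)]
          intro h0
          have : z ∈ T.neighborSet v := hadj
          rw [h0] at this
          exact this
        have := hdeg v
        omega
      rw [Fintype.card_prod, hV1, hW1] at hne1
      exact hne1 rfl
    obtain ⟨w0, c₀, hc₀⟩ := hM hWne1
    set M' : SimpleGraph W := SimpleGraph.fromEdgeSet {e | e ∈ c₀.edges} with hM'
    have hM'M : M' ≤ M := by
      intro i j h
      rw [hM', SimpleGraph.fromEdgeSet_adj] at h
      exact c₀.adj_of_mem_edges h.1
    have hedges : ∀ e ∈ c₀.edges, e ∈ M'.edgeSet := by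
      intro e
      induction e using Sym2.ind with
      | _ a b =>
        intro he
        rw [SimpleGraph.mem_edgeSet, hM', SimpleGraph.fromEdgeSet_adj]
        exact ⟨he, (c₀.adj_of_mem_edges he).ne⟩
    set c : M'.Walk w0 w0 := c₀.transfer M' hedges with hcdef
    have hc : c.IsHamiltonianCycle := by
      rw [hamCycle_iff]
      refine ⟨hc₀.isCycle.transfer hedges, ?_⟩
      intro v
      rw [hcdef, Walk.support_transfer]
      exact hc₀.mem_support v
    have hedge : ∀ i j : W, M'.Adj i j → s(i, j) ∈ c.edges := by
      intro i j h
      rw [hM', SimpleGraph.fromEdgeSet_adj] at h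
      rw [hcdef, Walk.edges_transfer]
      exact h.1
    obtain ⟨a, p, hp, -⟩ := treeBox W M' c hc hedge (Fintype.card V) V T rfl htree hdeg
    have hφadj : ∀ q r : V × W, (T □ M').Adj q r → (T □ M).Adj q r := by
      intro q r h
      rw [SimpleGraph.boxProd_adj] at h ⊢
      rcases h with ⟨h1, h2⟩ | ⟨h1, h2⟩
      · exact Or.inl ⟨h1, h2⟩
      · exact Or.inr ⟨hM'M h1, h2⟩
    exact ⟨a, p.map ⟨id, fun {q r} h => hφadj q r h⟩,
      hp.map Function.bijective_id⟩
  exact ⟨hham, hbox, hham.mono hbox⟩
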